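/- Let β be an alternating bicharacter of type I on a finite abelian group T. Then the map sending u ∈ T to u^⊥ := {v ∈ T ∣ β(u,v) = 1} is a bijection from T onto the set of all subgroups of T of index at most 2. -/

import Mathlib

/-- An alternating bicharacter on a (multiplicative) finite abelian group `T`,
with values in `ℝˣ`. -/
def IsAltBichar {T : Type*} [CommGroup T] (β : T → T → ℝˣ) : Prop :=
  (∀ u v w : T, β (u * v) w = β u w * β v w) ∧
  (∀ u v w : T, β u (v * w) = β u v * β u w) ∧
  (∀ u : T, β u u = 1)

section Aux

variable {T : Type*} [CommGroup T] [Fintype T] {β : T → T → ℝˣ}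

lemma bichar_one_right (hβ : IsAltBichar β) (u : T) : β u 1 = 1 := by
  have h := hβ.2.1 u 1 1
  rw [one_mul] at h
  exact (mul_eq_right.mp h.symm)

lemma bichar_one_left (hβ : IsAltBichar β) (v : T) : β 1 v = 1 := by
  have h := hβ.1 1 1 v
  rw [one_mul] at h
  exact (mul_eq_right.mp h.symm)

lemma bichar_pow (hβ : IsAltBichar β) (u v : T) (n : ℕ) : β u (v ^ n) = β u v ^ n := by
  induction n with
  | zero => simp [bichar_one_right hβ]
  | succ n ih => rw [pow_succ, pow_succ, hβ.2.1, ih]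

lemma bichar_pm (hβ : IsAltBichar β) (u v : T) : β u v = 1 ∨ β u v = -1 := by
  have h : β u v ^ Fintype.card T = 1 := by
    rw [← bichar_pow hβ, pow_card_eq_one, bichar_one_right hβ]
  have h' : ((β u v : ℝ)) ^ Fintype.card T = 1 := by
    have := congrArg (Units.val) h
    simpa using this
  have hc : Fintype.card T ≠ 0 := Fintype.card_ne_zero
  rcases (pow_eq_one_iff_of_ne_zero hc).mp h' with h1 | h1
  · left; ext; simpa using h1
  · right; ext; simpa using h1.1

lemma bichar_mul_symm (hβ : IsAltBichar β) (u v : T) : β u v * β v u = 1 := by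
  have h := hβ.2.2 (u * v)
  rw [hβ.1, hβ.2.1, hβ.2.1, hβ.2.2, hβ.2.2, one_mul, mul_one] at h
  exact h

lemma bichar_symm (hβ : IsAltBichar β) (u v : T) : β v u = β u v := by
  have h := bichar_mul_symm hβ u v
  rcases bichar_pm hβ u v with h1 | h1 <;>
    rcases bichar_pm hβ v u with h2 | h2 <;> rw [h1, h2] at h ⊢ <;>
    first
      | rfl
      | (exfalso
         have := congrArg Units.val h
         norm_num at this)

lemma bichar_inv_right (hβ : IsAltBichar β) (u v : T) : β u v⁻¹ = (β u v)⁻¹ := by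
  have h : β u v⁻¹ * β u v = 1 := by
    rw [← hβ.2.1, inv_mul_cancel, bichar_one_right hβ]
  exact eq_inv_of_mul_eq_one_left h

lemma bichar_inv_left (hβ : IsAltBichar β) (u v : T) : β u⁻¹ v = (β u v)⁻¹ := by
  have h : β u⁻¹ v * β u v = 1 := by
    rw [← hβ.1, inv_mul_cancel, bichar_one_left hβ]
  exact eq_inv_of_mul_eq_one_left h

end Aux

/-- Let `β` be an alternating bicharacter of type I (trivial radical) on a finite
abelian group `T`.  Then `u ↦ u^⊥ = {v ∣ β(u,v) = 1}` is a bijection from `T` onto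
the set of all subgroups of `T` of index at most 2. -/
theorem stmt1 {T : Type*} [CommGroup T] [Fintype T]
    (β : T → T → ℝˣ) (hβ : IsAltBichar β)
    (hI : ∀ t : T, (∀ u : T, β u t = 1) → t = 1) :
    ∃ F : T → Subgroup T,
      (∀ u : T, (F u : Set T) = {v : T | β u v = 1}) ∧
      Function.Injective F ∧
      Set.range F = {S : Subgroup T | S.index ≤ 2} := by
  classical
  -- every element has order dividing 2
  have hsq : ∀ u : T, u * u = 1 := by
    intro u
    apply hI
    intro v
    rw [hβ.2.1]
    rcases bichar_pm hβ v u with h | h <;> rw [h] <;> norm_num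
  -- the orthogonal-complement subgroups
  set F : T → Subgroup T := fun u =>
    { carrier := {v : T | β u v = 1}
      one_mem' := bichar_one_right hβ u
      mul_mem' := by
        intro a b ha hb
        simp only [Set.mem_setOf_eq] at *
        rw [hβ.2.1, ha, hb, mul_one]
      inv_mem' := by
        intro a ha
        simp only [Set.mem_setOf_eq] at *
        rw [bichar_inv_right hβ, ha, inv_one] } with hF
  have hmem : ∀ u v : T, v ∈ F u ↔ β u v = 1 := fun _ _ => Iff.rfl
  have hne : (-1 : ℝˣ) ≠ 1 := by
    intro h
    have := congrArg Units.val h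
    norm_num at this
  have hFinj : Function.Injective F := by
    intro u u' h
    have hall : ∀ v, β u v = β u' v := by
      intro v
      rcases bichar_pm hβ u v with h1 | h1 <;> rcases bichar_pm hβ u' v with h2 | h2 <;>
        rw [h1, h2]
      · have : v ∈ F u := h1
        rw [h] at this
        exact absurd ((hmem u' v).mp this) (by rw [h2]; exact hne)
      · have : v ∈ F u' := h2
        rw [← h] at this
        exact absurd ((hmem u v).mp this) (by rw [h1]; exact hne)
    have : u * u'⁻¹ = 1 := by
      apply hI
      intro v
      rw [bichar_symm hβ, hβ.1, bichar_inv_left hβ, hall v, mul_inv_cancel]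
    exact mul_inv_eq_one.mp this
  refine ⟨F, fun u => rfl, hFinj, ?_⟩
  have hsub : Set.range F ⊆ {S : Subgroup T | S.index ≤ 2} := by
    rintro _ ⟨u, rfl⟩
    simp only [Set.mem_setOf_eq]
    by_cases hT : ∀ v, β u v = 1
    · have : F u = ⊤ := by
        rw [Subgroup.eq_top_iff']
        intro v; exact hT v
      rw [this, Subgroup.index_top]
      norm_num
    · push_neg at hT
      obtain ⟨w, hw⟩ := hT
      have hw' : β u w = -1 := (bichar_pm hβ u w).resolve_left hw
      have : (F u).index = 2 := by
        rw [Subgroup.index_eq_two_iff]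
        refine ⟨w, fun b => ?_⟩
        rcases bichar_pm hβ u b with h1 | h1
        · right
          refine ⟨h1, ?_⟩
          intro hmem'
          have : β u (b * w) = 1 := hmem'
          rw [hβ.2.1, h1, hw', one_mul] at this
          exact hne this
        · left
          constructor
          · show β u (b * w) = 1
            rw [hβ.2.1, h1, hw']
            ext; norm_num
          · intro hmem'
            have : β u b = 1 := hmem'
            rw [h1] at this
            exact hne this
      rw [this]
  -- counting: subgroups of index ≤ 2 inject into the `ZMod 2`-dual of `T`
  letI : Module (ZMod 2) (Additive T) := AddCommGroup.zmodModule (by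
    intro x
    show (2 : ℕ) • x = 0
    rw [two_nsmul]
    show Additive.ofMul (x.toMul * x.toMul) = 0
    rw [hsq]; rfl)
  have hcard : Nat.card {S : Subgroup T | S.index ≤ 2} ≤ Nat.card T := by
    have key : ∀ S : Subgroup T, ∀ a b : T, a ∉ S → b ∉ S → a * b ∈ S → False → True :=
      fun _ _ _ _ _ _ _ => trivial
    have key2 : ∀ S : Subgroup T, S.index ≤ 2 → ∀ a b : T, a ∉ S → b ∉ S → a * b ∈ S := by
      intro S hS a b ha hb
      have hne1 : S.index ≠ 0 := Subgroup.index_ne_zero_of_finite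
      rcases (show S.index = 1 ∨ S.index = 2 by omega) with h | h
      · have : S = ⊤ := Subgroup.index_eq_one.mp h
        exact absurd (this ▸ Subgroup.mem_top a) ha
      · obtain ⟨c, hc⟩ := Subgroup.index_eq_two_iff.mp h
        have hac : a * c ∈ S := by
          rcases hc a with ⟨h1, _⟩ | ⟨h1, _⟩
          · exact h1
          · exact absurd h1 ha
        have hbc : b * c ∈ S := by
          rcases hc b with ⟨h1, _⟩ | ⟨h1, _⟩
          · exact h1
          · exact absurd h1 hb
        have hprod : (a * c) * (b * c) ∈ S := S.mul_mem hac hbc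
        have heq : (a * c) * (b * c) = (a * b) * (c * c) := mul_mul_mul_comm a c b c
        rwa [heq, hsq c, mul_one] at hprod
    set σ : {S : Subgroup T | S.index ≤ 2} → Module.Dual (ZMod 2) (Additive T) :=
      fun S =>
        AddMonoidHom.toZModLinearMap 2
          { toFun := fun v => if v.toMul ∈ S.1 then (0 : ZMod 2) else 1
            map_zero' := by simp [Subgroup.one_mem]
            map_add' := by
              intro a b
              show (if a.toMul * b.toMul ∈ S.1 then (0 : ZMod 2) else 1) =
                (if a.toMul ∈ S.1 then (0 : ZMod 2) else 1) +
                  (if b.toMul ∈ S.1 then (0 : ZMod 2) else 1)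
              by_cases ha : a.toMul ∈ S.1 <;> by_cases hb : b.toMul ∈ S.1
              · rw [if_pos (S.1.mul_mem ha hb), if_pos ha, if_pos hb]
                decide
              · have hnab : a.toMul * b.toMul ∉ S.1 := fun hab =>
                  hb (by simpa using S.1.mul_mem (S.1.inv_mem ha) hab)
                rw [if_neg hnab, if_pos ha, if_neg hb]
                decide
              · have hnab : a.toMul * b.toMul ∉ S.1 := fun hab =>
                  ha (by
                    have := S.1.mul_mem hab (S.1.inv_mem hb)
                    simpa using this)
                rw [if_neg hnab, if_neg ha, if_pos hb]
                decide
              · have hab : a.toMul * b.toMul ∈ S.1 := key2 S.1 S.2 _ _ ha hb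
                rw [if_pos hab, if_neg ha, if_neg hb]
                decide } with hσ
    have hσinj : Function.Injective σ := by
      intro S S' h
      have hv : ∀ v : T, (if v ∈ S.1 then (0 : ZMod 2) else 1) =
          (if v ∈ S'.1 then (0 : ZMod 2) else 1) := by
        intro v
        exact DFunLike.congr_fun h (Additive.ofMul v)
      apply Subtype.ext
      ext v
      have h2 := hv v
      constructor <;> intro hv'
      · by_contra hcon
        rw [if_pos hv', if_neg hcon] at h2
        exact absurd h2 (by decide)
      · by_contra hcon
        rw [if_neg hcon, if_pos hv'] at h2
        exact absurd h2.symm (by decide)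
    haveI : Finite (Module.Dual (ZMod 2) (Additive T)) :=
      Finite.of_injective (fun f => (f : Additive T → ZMod 2)) DFunLike.coe_injective
    have h1 : Nat.card {S : Subgroup T | S.index ≤ 2} ≤
        Nat.card (Module.Dual (ZMod 2) (Additive T)) :=
      Nat.card_le_card_of_injective σ hσinj
    have h2 : Nat.card (Module.Dual (ZMod 2) (Additive T)) = Nat.card (Additive T) := by
      haveI : Module.Finite (ZMod 2) (Additive T) := Module.Finite.of_finite
      haveI f1 : Fintype (Additive T) := Fintype.ofFinite _
      haveI f2 : Fintype (Module.Dual (ZMod 2) (Additive T)) := Fintype.ofFinite _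
      rw [Nat.card_eq_fintype_card, Nat.card_eq_fintype_card,
        Module.card_eq_pow_finrank (K := ZMod 2) (V := Additive T),
        Module.card_eq_pow_finrank (K := ZMod 2) (V := Module.Dual (ZMod 2) (Additive T)),
        Subspace.dual_finrank_eq]
    have h3 : Nat.card (Additive T) = Nat.card T := rfl
    omega
  -- conclude by cardinality
  apply Set.eq_of_subset_of_ncard_le hsub _ (Set.toFinite _)
  have hrange : (Set.range F).ncard = Nat.card T := by
    rw [← Nat.card_coe_set_eq, Nat.card_range_of_injective hFinj]
  rw [hrange, ← Nat.card_coe_set_eq]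
  exact hcard
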